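/- Consider a BPVE with first moments m_n > 0 and second moments m_n^{(2)} satisfying m_n^{(2)} < ∞ for every sufficiently large n. If lim_{n→∞} m_n = +∞ and there exist M, k ≥ 1 such that m_n^{(2)}/m_n² ≤ k·M^n for all sufficiently large n, then the BPVE survives, i.e. p_e < 1. -/

import Mathlib

open Filter ENNReal

/-- Probability generating function `Φ_n(z) := ∑_i ρ_n(i) z^i` of the `n`-th offspring
distribution of a branching process in varying environment (BPVE). -/
noncomputable def Phi (ρ : ℕ → ℕ → ℝ) (n : ℕ) (z : ℝ) : ℝ :=
  ∑' i : ℕ, ρ n i * z ^ i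

/-- The iterated generating functions `H_0(z) := z`, `H_{n+1} := H_n ∘ Φ_n`;
`H_n(0)` is the probability of extinction by generation `n`, and the extinction
probability is `p_e = lim_n H_n(0)`. -/
noncomputable def Hseq (ρ : ℕ → ℕ → ℝ) : ℕ → ℝ → ℝ
  | 0 => fun z => z
  | n + 1 => fun z => Hseq ρ n (Phi ρ n z)

/-- First moment `m_n := ∑_i i ρ_n(i) ∈ [0,∞]` of the `n`-th offspring distribution. -/
noncomputable def mom (ρ : ℕ → ℕ → ℝ) (n : ℕ) : ℝ≥0∞ :=
  ∑' i : ℕ, (i : ℝ≥0∞) * ENNReal.ofReal (ρ n i)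

/-- Second moment `m_n⁽²⁾ := ∑_i i² ρ_n(i) ∈ [0,∞]` of the `n`-th offspring
distribution. -/
noncomputable def mom2 (ρ : ℕ → ℕ → ℝ) (n : ℕ) : ℝ≥0∞ :=
  ∑' i : ℕ, (i : ℝ≥0∞) ^ 2 * ENNReal.ofReal (ρ n i)

open Finset

lemma one_sub_pow_eq' (z : ℝ) (n : ℕ) :
    1 - z ^ n = (1 - z) * ∑ j ∈ Finset.range n, z ^ j := by
  linear_combination geom_sum_mul z n

lemma cross' (z : ℝ) (hz0 : 0 ≤ z) (hz1 : z ≤ 1) {i l : ℕ} (h : i ≤ l) :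
    (i : ℝ) * (1 - z ^ l) ≤ (l : ℝ) * (1 - z ^ i) := by
  have hq : (0:ℝ) ≤ 1 - z := by linarith
  have hsplit : ∑ j ∈ Finset.range i, z ^ j + ∑ j ∈ Finset.Ico i l, z ^ j
      = ∑ j ∈ Finset.range l, z ^ j := Finset.sum_range_add_sum_Ico _ h
  have hT : ∑ j ∈ Finset.Ico i l, z ^ j ≤ (l - i : ℕ) * z ^ i := by
    have := Finset.sum_le_card_nsmul (Finset.Ico i l) (fun j => z ^ j) (z ^ i)
      (fun j hj => pow_le_pow_of_le_one hz0 hz1 (Finset.mem_Ico.mp hj).1)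
    simpa [Nat.card_Ico, nsmul_eq_mul] using this
  have hS : (i : ℝ) * z ^ i ≤ ∑ j ∈ Finset.range i, z ^ j := by
    have := Finset.card_nsmul_le_sum (Finset.range i) (fun j => z ^ j) (z ^ i)
      (fun j hj => pow_le_pow_of_le_one hz0 hz1 (le_of_lt (Finset.mem_range.mp hj)))
    simpa [nsmul_eq_mul] using this
  have hcast : ((l - i : ℕ) : ℝ) = (l : ℝ) - i := by
    push_cast [Nat.cast_sub h]; ring
  rw [hcast] at hT
  have hiT : (i:ℝ) * ∑ j ∈ Finset.Ico i l, z ^ j ≤ ((l:ℝ) - i) * ∑ j ∈ Finset.range i, z ^ j := by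
    have h1 : (i:ℝ) * ∑ j ∈ Finset.Ico i l, z ^ j ≤ (i:ℝ) * (((l:ℝ) - i) * z ^ i) :=
      mul_le_mul_of_nonneg_left hT (by positivity)
    have h2 : ((l:ℝ) - i) * ((i:ℝ) * z ^ i) ≤ ((l:ℝ) - i) * ∑ j ∈ Finset.range i, z ^ j := by
      apply mul_le_mul_of_nonneg_left hS
      have : (i:ℝ) ≤ l := by exact_mod_cast h
      linarith
    nlinarith [h1, h2]
  have key : (i:ℝ) * ∑ j ∈ Finset.range l, z ^ j ≤ (l:ℝ) * ∑ j ∈ Finset.range i, z ^ j := by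
    rw [← hsplit]; nlinarith [hiT]
  calc (i:ℝ) * (1 - z ^ l) = (1 - z) * ((i:ℝ) * ∑ j ∈ Finset.range l, z ^ j) := by
        rw [one_sub_pow_eq']; ring
    _ ≤ (1 - z) * ((l:ℝ) * ∑ j ∈ Finset.range i, z ^ j) := mul_le_mul_of_nonneg_left key hq
    _ = (l : ℝ) * (1 - z ^ i) := by rw [one_sub_pow_eq']; ring

-- w i := ∑_{j<i} (1 - z^j)
lemma w_le (z : ℝ) (hz0 : 0 ≤ z) (hz1 : z ≤ 1) (i : ℕ) :
    ∑ j ∈ Finset.range i, (1 - z ^ j) ≤ (i : ℝ) * (1 - z ^ i) := by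
  have := Finset.sum_le_card_nsmul (Finset.range i) (fun j => 1 - z ^ j) (1 - z ^ i)
    (fun j hj => by
      show (1:ℝ) - z ^ j ≤ 1 - z ^ i
      have : z ^ i ≤ z ^ j := pow_le_pow_of_le_one hz0 hz1 (le_of_lt (Finset.mem_range.mp hj))
      linarith)
  simpa [nsmul_eq_mul] using this

lemma w_nonneg (z : ℝ) (hz1 : z ≤ 1) (hz0 : 0 ≤ z) (i : ℕ) :
    0 ≤ ∑ j ∈ Finset.range i, (1 - z ^ j) :=
  Finset.sum_nonneg fun j _ => by
    have : z ^ j ≤ 1 := pow_le_one₀ hz0 hz1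
    linarith

lemma pair_half (z : ℝ) (hz0 : 0 ≤ z) (hz1 : z ≤ 1) {i l : ℕ} (h : i ≤ l) :
    (i : ℝ) * (∑ j ∈ Finset.range l, (1 - z ^ j)) + (l : ℝ) * (∑ j ∈ Finset.range i, (1 - z ^ j))
      ≤ (1 - z ^ i) * (l : ℝ) ^ 2 + (1 - z ^ l) * (i : ℝ) ^ 2 := by
  have hil : (i:ℝ) ≤ l := by exact_mod_cast h
  have hi0 : (0:ℝ) ≤ i := Nat.cast_nonneg i
  have h1 : (i : ℝ) * (∑ j ∈ Finset.range l, (1 - z ^ j)) ≤ (i:ℝ) * ((l:ℝ) * (1 - z ^ l)) :=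
    mul_le_mul_of_nonneg_left (w_le z hz0 hz1 l) hi0
  have h2 : (l : ℝ) * (∑ j ∈ Finset.range i, (1 - z ^ j)) ≤ (l:ℝ) * ((i:ℝ) * (1 - z ^ i)) :=
    mul_le_mul_of_nonneg_left (w_le z hz0 hz1 i) (by linarith)
  have h3 := cross' z hz0 hz1 h
  nlinarith [mul_le_mul_of_nonneg_left h3 (show (0:ℝ) ≤ (l:ℝ) - i by linarith)]

lemma pair_full (z : ℝ) (hz0 : 0 ≤ z) (hz1 : z ≤ 1) (i l : ℕ) :
    (i : ℝ) * (∑ j ∈ Finset.range l, (1 - z ^ j)) + (l : ℝ) * (∑ j ∈ Finset.range i, (1 - z ^ j))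
      ≤ (1 - z ^ i) * (l : ℝ) ^ 2 + (1 - z ^ l) * (i : ℝ) ^ 2 := by
  rcases le_total i l with h | h
  · exact pair_half z hz0 hz1 h
  · have := pair_half z hz0 hz1 h
    linarith

section Basics
variable (ρ : ℕ → ℕ → ℝ) (n : ℕ)
variable (hρ0 : ∀ i, 0 ≤ ρ n i) (hρ1 : HasSum (ρ n) 1)
include hρ0 hρ1

lemma summable_pz {z : ℝ} (hz0 : 0 ≤ z) (hz1 : z ≤ 1) :
    Summable (fun i => ρ n i * z ^ i) := by
  apply Summable.of_nonneg_of_le (fun i => mul_nonneg (hρ0 i) (by positivity)) (fun i => ?_) hρ1.summable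
  calc ρ n i * z ^ i ≤ ρ n i * 1 :=
        mul_le_mul_of_nonneg_left (pow_le_one₀ hz0 hz1) (hρ0 i)
    _ = ρ n i := mul_one _

lemma hasSum_phi {z : ℝ} (hz0 : 0 ≤ z) (hz1 : z ≤ 1) :
    HasSum (fun i => ρ n i * z ^ i) (Phi ρ n z) :=
  (summable_pz ρ n hρ0 hρ1 hz0 hz1).hasSum

lemma phi_nonneg {z : ℝ} (hz0 : 0 ≤ z) (hz1 : z ≤ 1) : 0 ≤ Phi ρ n z :=
  tsum_nonneg (fun i => mul_nonneg (hρ0 i) (by positivity))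

/-- crude bound : Phi z ≤ p 0 + z * (1 - p 0) -/
lemma phi_crude {z : ℝ} (hz0 : 0 ≤ z) (hz1 : z ≤ 1) :
    Phi ρ n z ≤ ρ n 0 + z * (1 - ρ n 0) := by
  set g : ℕ → ℝ := fun i => if i = 0 then ρ n 0 else ρ n i * z with hg
  have hgle : ∀ i, g i ≤ ρ n i := by
    intro i
    cases i with
    | zero => simp [hg]
    | succ i =>
      simp only [hg, if_neg (Nat.succ_ne_zero i)]
      calc ρ n (i+1) * z ≤ ρ n (i+1) * 1 := mul_le_mul_of_nonneg_left hz1 (hρ0 _)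
        _ = ρ n (i+1) := mul_one _
  have hgnn : ∀ i, 0 ≤ g i := by
    intro i; cases i with
    | zero => simpa [hg] using hρ0 0
    | succ i => simp only [hg, if_neg (Nat.succ_ne_zero i)]; exact mul_nonneg (hρ0 _) hz0
  have hgsum : Summable g := Summable.of_nonneg_of_le hgnn hgle hρ1.summable
  have hle : ∀ i, ρ n i * z ^ i ≤ g i := by
    intro i; cases i with
    | zero => simp [hg]
    | succ i =>
      simp only [hg, if_neg (Nat.succ_ne_zero i)]
      apply mul_le_mul_of_nonneg_left _ (hρ0 _)
      calc z ^ (i+1) ≤ z ^ 1 := pow_le_pow_of_le_one hz0 hz1 (Nat.one_le_iff_ne_zero.mpr (Nat.succ_ne_zero i))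
        _ = z := pow_one z
  have h1 : Phi ρ n z ≤ ∑' i, g i :=
    Summable.tsum_le_tsum hle (summable_pz ρ n hρ0 hρ1 hz0 hz1) hgsum
  have hshift : Summable (fun i => ρ n (i+1)) := (summable_nat_add_iff 1).2 hρ1.summable
  have htail : ∑' i, ρ n (i+1) = 1 - ρ n 0 := by
    have := Summable.tsum_eq_zero_add hρ1.summable
    rw [hρ1.tsum_eq] at this
    linarith
  have h2 : ∑' i, g i = ρ n 0 + z * (1 - ρ n 0) := by
    rw [Summable.tsum_eq_zero_add hgsum]
    have : ∀ i : ℕ, g (i+1) = z * ρ n (i+1) := by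
      intro i; simp only [hg, if_neg (Nat.succ_ne_zero i)]; ring
    simp only [this]
    rw [tsum_mul_left, htail]
    simp [hg]
  linarith

lemma one_sub_phi_pos (hρlt : ρ n 0 < 1) {z : ℝ} (hz0 : 0 ≤ z) (hz1 : z < 1) :
    (1 - ρ n 0) * (1 - z) ≤ 1 - Phi ρ n z := by
  have := phi_crude ρ n hρ0 hρ1 hz0 (le_of_lt hz1)
  nlinarith

lemma phi_mem (hρlt : ρ n 0 < 1) {z : ℝ} (hz0 : 0 ≤ z) (hz1 : z < 1) :
    0 ≤ Phi ρ n z ∧ Phi ρ n z < 1 := by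
  refine ⟨phi_nonneg ρ n hρ0 hρ1 hz0 (le_of_lt hz1), ?_⟩
  have := one_sub_phi_pos ρ n hρ0 hρ1 hρlt hz0 hz1
  nlinarith

end Basics

lemma hseq_mem (ρ : ℕ → ℕ → ℝ) (hρ0 : ∀ n i, 0 ≤ ρ n i) (hρ1 : ∀ n, HasSum (ρ n) 1)
    (hρlt : ∀ n, ρ n 0 < 1) :
    ∀ n {z : ℝ}, 0 ≤ z → z < 1 → 0 ≤ Hseq ρ n z ∧ Hseq ρ n z < 1 := by
  intro n
  induction n with
  | zero => intro z h0 h1; exact ⟨h0, h1⟩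
  | succ n ih =>
    intro z h0 h1
    have hphi := phi_mem ρ n (hρ0 n) (hρ1 n) (hρlt n) h0 h1
    exact ih hphi.1 hphi.2

lemma mom_le_mom2 (ρ : ℕ → ℕ → ℝ) (n : ℕ) : mom ρ n ≤ mom2 ρ n := by
  apply ENNReal.tsum_le_tsum
  intro i
  apply mul_le_mul_left
  cases i with
  | zero => simp
  | succ i =>
    exact le_self_pow₀ (by exact_mod_cast Nat.one_le_iff_ne_zero.mpr (Nat.succ_ne_zero i)) two_ne_zero

lemma agresti (ρ : ℕ → ℕ → ℝ) (n : ℕ) (hρ0 : ∀ i, 0 ≤ ρ n i) (hρ1 : HasSum (ρ n) 1)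
    (hρlt : ρ n 0 < 1) (h2top : mom2 ρ n ≠ ⊤) (h0 : 0 < mom ρ n)
    {z : ℝ} (hz0 : 0 ≤ z) (hz1 : z < 1) :
    (1 - Phi ρ n z)⁻¹ ≤ (mom ρ n).toReal⁻¹ * (1 - z)⁻¹
      + (mom2 ρ n).toReal / (mom ρ n).toReal ^ 2 := by
  set p : ℕ → ℝ := ρ n with hp
  set b : ℕ → ℝ := fun i => 1 - z ^ i with hb
  set w : ℕ → ℝ := fun i => ∑ j ∈ Finset.range i, b j with hw
  have hb0 : ∀ i, 0 ≤ b i := fun i => by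
    have : z ^ i ≤ 1 := pow_le_one₀ hz0 hz1.le
    simp only [hb]; linarith
  have hb1 : ∀ i, b i ≤ 1 := fun i => by
    have : 0 ≤ z ^ i := by positivity
    simp only [hb]; linarith
  have hw0 : ∀ i, 0 ≤ w i := fun i => Finset.sum_nonneg fun j _ => hb0 j
  -- nonnegativity of the four real term families
  have ha1 : ∀ i : ℕ, 0 ≤ (i : ℝ) * p i := fun i => mul_nonneg (Nat.cast_nonneg i) (hρ0 i)
  have ha2 : ∀ i : ℕ, 0 ≤ p i * w i := fun i => mul_nonneg (hρ0 i) (hw0 i)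
  have ha3 : ∀ i : ℕ, 0 ≤ p i * b i := fun i => mul_nonneg (hρ0 i) (hb0 i)
  have ha4 : ∀ i : ℕ, 0 ≤ (i : ℝ) ^ 2 * p i := fun i => mul_nonneg (sq_nonneg _) (hρ0 i)
  -- moments as sums of single ofReal terms
  have hme : mom ρ n = ∑' i : ℕ, ENNReal.ofReal ((i : ℝ) * p i) := by
    exact tsum_congr fun i => by
      rw [ENNReal.ofReal_mul (Nat.cast_nonneg i), ENNReal.ofReal_natCast]
  have hm2e : mom2 ρ n = ∑' i : ℕ, ENNReal.ofReal ((i : ℝ) ^ 2 * p i) := by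
    exact tsum_congr fun i => by
      rw [ENNReal.ofReal_mul (sq_nonneg ((i : ℝ))), ENNReal.ofReal_pow (Nat.cast_nonneg i),
        ENNReal.ofReal_natCast]
  set ue : ℝ≥0∞ := ∑' i, ENNReal.ofReal (p i * b i) with hue
  set Se : ℝ≥0∞ := ∑' i, ENNReal.ofReal (p i * w i) with hSe
  have hmetop : mom ρ n ≠ ⊤ := fun h => h2top (top_le_iff.mp (h ▸ mom_le_mom2 ρ n))
  have hsumP : ∑' i, ENNReal.ofReal (p i) = 1 := by
    rw [← ENNReal.ofReal_tsum_of_nonneg hρ0 hρ1.summable, hρ1.tsum_eq, ENNReal.ofReal_one]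
  have huele : ue ≤ 1 := by
    rw [hue, ← hsumP]
    apply ENNReal.tsum_le_tsum
    intro i
    apply ENNReal.ofReal_le_ofReal
    calc p i * b i ≤ p i * 1 := mul_le_mul_of_nonneg_left (hb1 i) (hρ0 i)
      _ = p i := mul_one _
  have huetop : ue ≠ ⊤ := fun h => by simp [h] at huele
  have hexp : ∀ f g : ℕ → ℝ≥0∞, (∑' i, f i) * (∑' l, g l) = ∑' (i : ℕ), ∑' (l : ℕ), f i * g l := by
    intro f g
    rw [← ENNReal.tsum_mul_right]
    exact tsum_congr fun i => (ENNReal.tsum_mul_left).symm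
  -- the key double-sum bound
  have KEY : mom ρ n * Se ≤ ue * mom2 ρ n := by
    have hpoint : ∀ i l : ℕ,
        ENNReal.ofReal ((i:ℝ) * p i) * ENNReal.ofReal (p l * w l)
          + ENNReal.ofReal (p i * w i) * ENNReal.ofReal ((l:ℝ) * p l)
        ≤ ENNReal.ofReal (p i * b i) * ENNReal.ofReal ((l:ℝ) ^ 2 * p l)
          + ENNReal.ofReal ((i:ℝ) ^ 2 * p i) * ENNReal.ofReal (p l * b l) := by
      intro i l
      rw [← ENNReal.ofReal_mul (ha1 i), ← ENNReal.ofReal_mul (ha2 i),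
        ← ENNReal.ofReal_mul (ha3 i), ← ENNReal.ofReal_mul (ha4 i),
        ← ENNReal.ofReal_add (mul_nonneg (ha1 i) (ha2 l)) (mul_nonneg (ha2 i) (ha1 l)),
        ← ENNReal.ofReal_add (mul_nonneg (ha3 i) (ha4 l)) (mul_nonneg (ha4 i) (ha3 l))]
      apply ENNReal.ofReal_le_ofReal
      have hkey : (i:ℝ) * w l + (l:ℝ) * w i ≤ b i * (l:ℝ) ^ 2 + b l * (i:ℝ) ^ 2 := by
        simp only [hw, hb]
        exact pair_full z hz0 hz1.le i l
      have hpp : 0 ≤ p i * p l := mul_nonneg (hρ0 i) (hρ0 l)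
      nlinarith [mul_le_mul_of_nonneg_left hkey hpp]
    have main : mom ρ n * Se + mom ρ n * Se ≤ ue * mom2 ρ n + ue * mom2 ρ n := by
      calc mom ρ n * Se + mom ρ n * Se
          = ∑' (i : ℕ), ∑' (l : ℕ),
              (ENNReal.ofReal ((i:ℝ) * p i) * ENNReal.ofReal (p l * w l)
                + ENNReal.ofReal (p i * w i) * ENNReal.ofReal ((l:ℝ) * p l)) := by
            nth_rewrite 2 [mul_comm]
            rw [hme, hSe, hexp, hexp, ← ENNReal.tsum_add]
            exact tsum_congr fun i => (ENNReal.tsum_add).symm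
        _ ≤ ∑' (i : ℕ), ∑' (l : ℕ),
              (ENNReal.ofReal (p i * b i) * ENNReal.ofReal ((l:ℝ) ^ 2 * p l)
                + ENNReal.ofReal ((i:ℝ) ^ 2 * p i) * ENNReal.ofReal (p l * b l)) := by
            exact ENNReal.tsum_le_tsum fun i => ENNReal.tsum_le_tsum fun l => hpoint i l
        _ = ue * mom2 ρ n + ue * mom2 ρ n := by
            symm
            nth_rewrite 2 [mul_comm]
            rw [hue, hm2e, hexp, hexp, ← ENNReal.tsum_add]
            exact tsum_congr fun i => (ENNReal.tsum_add).symm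
    rw [← two_mul, ← two_mul] at main
    exact (ENNReal.mul_le_mul_iff_right (by norm_num) (by norm_num)).mp main
  have hSetop : Se ≠ ⊤ := by
    intro h
    have h1 : mom ρ n * Se = ⊤ := by rw [h]; exact ENNReal.mul_top h0.ne'
    have h2 : ue * mom2 ρ n ≠ ⊤ := ENNReal.mul_ne_top huetop h2top
    exact h2 (top_le_iff.mp (h1 ▸ KEY))
  -- pass to real numbers
  set m : ℝ := (mom ρ n).toReal with hm
  set m2 : ℝ := (mom2 ρ n).toReal with hm2
  have hm_pos : 0 < m := ENNReal.toReal_pos h0.ne' hmetop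
  have hm2_0 : 0 ≤ m2 := ENNReal.toReal_nonneg
  set S : ℝ := Se.toReal with hS
  set u : ℝ := ue.toReal with hu
  have hreal : m * S ≤ u * m2 := by
    have := ENNReal.toReal_mono (ENNReal.mul_ne_top huetop h2top) KEY
    rwa [ENNReal.toReal_mul, ENNReal.toReal_mul] at this
  -- identify the real sums
  have hS_eq : S = ∑' i, p i * w i := by
    rw [hS, hSe, ENNReal.tsum_toReal_eq fun i => ENNReal.ofReal_ne_top]
    exact tsum_congr fun i => ENNReal.toReal_ofReal (ha2 i)
  have hS_sum : Summable (fun i => p i * w i) := by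
    have h := ENNReal.summable_toReal (by rw [← hSe]; exact hSetop)
    exact h.congr fun i => ENNReal.toReal_ofReal (ha2 i)
  have hu_eq : u = ∑' i, p i * b i := by
    rw [hu, hue, ENNReal.tsum_toReal_eq fun i => ENNReal.ofReal_ne_top]
    exact tsum_congr fun i => ENNReal.toReal_ofReal (ha3 i)
  have hu_sum : Summable (fun i => p i * b i) := by
    have h := ENNReal.summable_toReal (by rw [← hue]; exact huetop)
    exact h.congr fun i => ENNReal.toReal_ofReal (ha3 i)
  have hm_eq : m = ∑' i : ℕ, (i:ℝ) * p i := by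
    rw [hm, hme, ENNReal.tsum_toReal_eq fun i => ENNReal.ofReal_ne_top]
    exact tsum_congr fun i => ENNReal.toReal_ofReal (ha1 i)
  have hm_sum : Summable (fun i : ℕ => (i:ℝ) * p i) := by
    have h := ENNReal.summable_toReal (by rw [← hme]; exact hmetop)
    exact h.congr fun i => ENNReal.toReal_ofReal (ha1 i)
  -- u = 1 - Phi
  have hu_phi : u = 1 - Phi ρ n z := by
    have h1 : HasSum (fun i => p i * z ^ i) (Phi ρ n z) := hasSum_phi ρ n hρ0 hρ1 hz0 hz1.le
    have h2 : HasSum (fun i => p i * b i) (1 - Phi ρ n z) := by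
      have h3 := hρ1.sub h1
      refine h3.congr_fun fun i => ?_  -- maybe wrong name
      simp only [hb]; ring
    rw [hu_eq, h2.tsum_eq]
  -- (1-z) * S = m * (1-z) - u
  have hqw : ∀ i : ℕ, (1 - z) * w i = (i:ℝ) * (1 - z) - b i := by
    intro i
    have hws : w i = (i : ℝ) - ∑ j ∈ Finset.range i, z ^ j := by
      simp only [hw, hb, Finset.sum_sub_distrib, Finset.sum_const, Finset.card_range,
        nsmul_eq_mul, mul_one]
    rw [hws]
    have hg := one_sub_pow_eq' z i
    simp only [hb]
    linear_combination hg
  have hqS : (1 - z) * S = m * (1 - z) - u := by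
    rw [hS_eq, ← tsum_mul_left]
    calc ∑' i : ℕ, (1 - z) * (p i * w i)
        = ∑' i : ℕ, ((i:ℝ) * p i * (1 - z) - p i * b i) := by
          exact tsum_congr fun i => by linear_combination (p i) * hqw i
      _ = (∑' i : ℕ, (i:ℝ) * p i * (1 - z)) - ∑' i : ℕ, p i * b i :=
          Summable.tsum_sub (hm_sum.mul_right _) hu_sum
      _ = m * (1 - z) - u := by rw [tsum_mul_right, ← hm_eq, ← hu_eq]
  -- positivity of u
  have hq_pos : (0:ℝ) < 1 - z := by linarith
  have hu_pos : 0 < u := by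
    rw [hu_phi]
    have := one_sub_phi_pos ρ n hρ0 hρ1 hρlt hz0 hz1
    nlinarith
  -- final algebra
  have hkey2 : m * (m * (1 - z) - u) ≤ (1 - z) * (u * m2) := by
    rw [← hqS]
    calc m * ((1 - z) * S) = (1 - z) * (m * S) := by ring
      _ ≤ (1 - z) * (u * m2) := mul_le_mul_of_nonneg_left hreal hq_pos.le
  rw [← hu_phi]
  have hrhs : m⁻¹ * (1 - z)⁻¹ + m2 / m ^ 2 = (m + (1 - z) * m2) / (m ^ 2 * (1 - z)) := by
    field_simp
  rw [hrhs, inv_eq_one_div, div_le_div_iff₀ hu_pos (by positivity)]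
  nlinarith [hkey2]

/-- Corollary, condition (4): a BPVE with positive first moments,
eventually finite second moments, `m_n → ∞` and `m_n⁽²⁾/m_n² ≤ k·Mⁿ` eventually
(for some `M, k ≥ 1`), survives, i.e. `p_e < 1`. -/
theorem bpve_survival_of_mean_tendsto_top (ρ : ℕ → ℕ → ℝ)
    (hρ0 : ∀ n i, 0 ≤ ρ n i) (hρ1 : ∀ n, HasSum (ρ n) 1)
    (hρlt : ∀ n, ρ n 0 < 1)
    (hm : ∀ j, 0 < mom ρ j)
    (hm2 : ∀ᶠ j in atTop, mom2 ρ j < ⊤)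
    (hmean : Tendsto (mom ρ) atTop (nhds ⊤))
    (M k : ℝ) (hM : 1 ≤ M) (hk : 1 ≤ k)
    (hbound : ∀ᶠ n in atTop, mom2 ρ n / (mom ρ n) ^ 2 ≤ ENNReal.ofReal (k * M ^ n))
    (pe : ℝ) (hpe : Tendsto (fun j => Hseq ρ j 0) atTop (nhds pe)) :
    pe < 1 := by
  have hMpos : (0:ℝ) < M := lt_of_lt_of_le one_pos hM
  have hkpos : (0:ℝ) < k := lt_of_lt_of_le one_pos hk
  have hgrow : ∀ᶠ n in atTop, ENNReal.ofReal (2 * M) < mom ρ n :=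
    hmean.eventually (Ioi_mem_nhds ENNReal.ofReal_lt_top)
  obtain ⟨N, hN⟩ := eventually_atTop.mp ((hm2.and hbound).and hgrow)
  -- facts for n ≥ N
  have h2top : ∀ n, N ≤ n → mom2 ρ n ≠ ⊤ := fun n hn => ((hN n hn).1.1).ne
  have hmomtop : ∀ n, N ≤ n → mom ρ n ≠ ⊤ := fun n hn =>
    fun h => h2top n hn (top_le_iff.mp (h ▸ mom_le_mom2 ρ n))
  have hmpos : ∀ n, N ≤ n → 0 < (mom ρ n).toReal := fun n hn =>
    ENNReal.toReal_pos (hm n).ne' (hmomtop n hn)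
  have hm2M : ∀ n, N ≤ n → 2 * M ≤ (mom ρ n).toReal := by
    intro n hn
    have h1 := (hN n hn).2.le
    calc 2 * M = (ENNReal.ofReal (2 * M)).toReal :=
          (ENNReal.toReal_ofReal (by linarith)).symm
      _ ≤ (mom ρ n).toReal := ENNReal.toReal_mono (hmomtop n hn) h1
  -- the step factors
  set r : ℕ → ℝ := fun j => if j < N then (1 - ρ j 0)⁻¹ else ((mom ρ j).toReal)⁻¹ with hr
  set c : ℕ → ℝ := fun j =>
    if j < N then 0 else (mom2 ρ j).toReal / ((mom ρ j).toReal) ^ 2 with hc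
  have hrpos : ∀ j, 0 < r j := by
    intro j
    simp only [hr]
    split
    · have := hρlt j; exact inv_pos.mpr (by linarith)
    · next h => exact inv_pos.mpr (hmpos j (le_of_not_gt h))
  have hcnn : ∀ j, 0 ≤ c j := by
    intro j
    simp only [hc]
    split
    · exact le_refl 0
    · positivity
  have hapos : ∀ n, 0 < ∏ j ∈ Finset.range n, r j :=
    fun n => Finset.prod_pos fun j _ => hrpos j
  -- per-step inequality
  have hstep : ∀ n : ℕ, ∀ z : ℝ, 0 ≤ z → z < 1 →
      (1 - Phi ρ n z)⁻¹ ≤ r n * (1 - z)⁻¹ + c n := by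
    intro n z hz0 hz1
    by_cases hn : n < N
    · have hcr := one_sub_phi_pos ρ n (hρ0 n) (hρ1 n) (hρlt n) hz0 hz1
      have hp0 : (0:ℝ) < 1 - ρ n 0 := by have := hρlt n; linarith
      have hq : (0:ℝ) < 1 - z := by linarith
      have hpos : (0:ℝ) < (1 - ρ n 0) * (1 - z) := mul_pos hp0 hq
      have h1 : (1 - Phi ρ n z)⁻¹ ≤ ((1 - ρ n 0) * (1 - z))⁻¹ :=
        inv_anti₀ hpos hcr
      simp only [hr, hc, if_pos hn]
      rw [mul_inv] at h1
      linarith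
    · push_neg at hn
      have h := agresti ρ n (hρ0 n) (hρ1 n) (hρlt n) (h2top n hn) (hm n) hz0 hz1
      simp only [hr, hc, if_neg (not_lt.mpr hn)]
      exact h
  -- main induction
  have claim1 : ∀ n : ℕ, ∀ z : ℝ, 0 ≤ z → z < 1 →
      (1 - Hseq ρ n z)⁻¹ ≤ (∏ j ∈ Finset.range n, r j) * (1 - z)⁻¹
        + ∑ j ∈ Finset.range n, (∏ i ∈ Finset.range j, r i) * c j := by
    intro n
    induction n with
    | zero => intro z hz0 hz1; simp [Hseq]
    | succ n ih =>
      intro z hz0 hz1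
      have hy := phi_mem ρ n (hρ0 n) (hρ1 n) (hρlt n) hz0 hz1
      have hH : Hseq ρ (n + 1) z = Hseq ρ n (Phi ρ n z) := rfl
      rw [hH]
      have h1 := ih (Phi ρ n z) hy.1 hy.2
      have h2 := hstep n z hz0 hz1
      have h3 : (∏ j ∈ Finset.range n, r j) * (1 - Phi ρ n z)⁻¹
          ≤ (∏ j ∈ Finset.range n, r j) * (r n * (1 - z)⁻¹ + c n) :=
        mul_le_mul_of_nonneg_left h2 (hapos n).le
      rw [Finset.prod_range_succ, Finset.sum_range_succ]
      calc (1 - Hseq ρ n (Phi ρ n z))⁻¹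
          ≤ (∏ j ∈ Finset.range n, r j) * (1 - Phi ρ n z)⁻¹
            + ∑ j ∈ Finset.range n, (∏ i ∈ Finset.range j, r i) * c j := h1
        _ ≤ (∏ j ∈ Finset.range n, r j) * (r n * (1 - z)⁻¹ + c n)
            + ∑ j ∈ Finset.range n, (∏ i ∈ Finset.range j, r i) * c j := by linarith
        _ = (∏ j ∈ Finset.range n, r j) * r n * (1 - z)⁻¹
            + (∑ j ∈ Finset.range n, (∏ i ∈ Finset.range j, r i) * c j
              + (∏ i ∈ Finset.range n, r i) * c n) := by ring
  -- decay bounds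
  set aN : ℝ := ∏ j ∈ Finset.range N, r j with haN
  have haNpos : 0 < aN := hapos N
  set D : ℝ := aN * k * M ^ N with hD
  have hDpos : 0 < D := by positivity
  have claim2 : ∀ n, N ≤ n →
      (∏ j ∈ Finset.range n, r j) ≤ aN * ((2 * M)⁻¹) ^ (n - N)
        ∧ (∑ j ∈ Finset.range n, (∏ i ∈ Finset.range j, r i) * c j)
            ≤ 2 * D * (1 - (2⁻¹ : ℝ) ^ (n - N)) := by
    intro n hn
    induction n, hn using Nat.le_induction with
    | base =>
      constructor
      · simp [haN]
      · have : ∀ j ∈ Finset.range N, (∏ i ∈ Finset.range j, r i) * c j = 0 := by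
          intro j hj
          have : c j = 0 := by simp only [hc, if_pos (Finset.mem_range.mp hj)]
          rw [this, mul_zero]
        rw [Finset.sum_eq_zero this]
        simp
    | succ n hNn ih =>
      have hd : n + 1 - N = (n - N) + 1 := by omega
      have hrn : r n ≤ (2 * M)⁻¹ := by
        simp only [hr, if_neg (not_lt.mpr hNn)]
        exact inv_anti₀ (by linarith) (hm2M n hNn)
      have hcn : c n ≤ k * M ^ n := by
        simp only [hc, if_neg (not_lt.mpr hNn)]
        have h1 := (hN n hNn).1.2
        calc (mom2 ρ n).toReal / (mom ρ n).toReal ^ 2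
            = (mom2 ρ n / (mom ρ n) ^ 2).toReal := by
              rw [ENNReal.toReal_div, ENNReal.toReal_pow]
          _ ≤ (ENNReal.ofReal (k * M ^ n)).toReal :=
              ENNReal.toReal_mono ENNReal.ofReal_ne_top h1
          _ = k * M ^ n := ENNReal.toReal_ofReal (by positivity)
      constructor
      · rw [Finset.prod_range_succ, hd, pow_succ, ← mul_assoc]
        exact mul_le_mul ih.1 hrn (hrpos n).le (by positivity)
      · rw [Finset.sum_range_succ, hd]
        have h4 : (∏ i ∈ Finset.range n, r i) * c n
            ≤ (aN * ((2 * M)⁻¹) ^ (n - N)) * (k * M ^ n) :=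
          mul_le_mul ih.1 hcn (hcnn n) (by positivity)
        have h5 : ((2 * M)⁻¹ : ℝ) ^ (n - N) * M ^ n = M ^ N * (2⁻¹ : ℝ) ^ (n - N) := by
          have hMn : M ^ n = M ^ N * M ^ (n - N) := by
            rw [← pow_add, Nat.add_sub_cancel' hNn]
          have e1 : ((2 * M)⁻¹ : ℝ) = 2⁻¹ * M⁻¹ := mul_inv 2 M
          rw [e1, mul_pow, hMn]
          have e2 : (M⁻¹ : ℝ) ^ (n - N) * M ^ (n - N) = 1 := by
            rw [inv_pow, inv_mul_cancel₀ (pow_ne_zero _ (ne_of_gt hMpos))]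
          calc (2⁻¹:ℝ) ^ (n-N) * M⁻¹ ^ (n-N) * (M ^ N * M ^ (n-N))
              = M ^ N * (2⁻¹:ℝ) ^ (n-N) * (M⁻¹ ^ (n-N) * M ^ (n-N)) := by ring
            _ = M ^ N * (2⁻¹:ℝ) ^ (n-N) := by rw [e2, mul_one]
        have h6 : (aN * ((2 * M)⁻¹) ^ (n - N)) * (k * M ^ n) = D * (2⁻¹:ℝ) ^ (n - N) := by
          rw [hD]
          calc (aN * ((2 * M)⁻¹) ^ (n - N)) * (k * M ^ n)
              = aN * k * (((2 * M)⁻¹) ^ (n - N) * M ^ n) := by ring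
            _ = aN * k * (M ^ N * (2⁻¹:ℝ) ^ (n - N)) := by rw [h5]
            _ = aN * k * M ^ N * (2⁻¹:ℝ) ^ (n - N) := by ring
        rw [h6] at h4
        have h7 := ih.2
        rw [pow_succ]
        nlinarith [h4, h7]
  -- conclusion
  set C : ℝ := aN + 2 * D with hC
  have hCpos : 0 < C := by positivity
  have hfin : ∀ n, N ≤ n → Hseq ρ n 0 ≤ 1 - C⁻¹ := by
    intro n hn
    have h1 := claim1 n 0 le_rfl one_pos
    simp only [sub_zero, inv_one, mul_one] at h1
    have h2 := claim2 n hn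
    have h2M1 : (1:ℝ) ≤ 2 * M := by linarith
    have hinv1 : ((2 * M)⁻¹ : ℝ) ≤ 1 := by
      simpa using inv_anti₀ one_pos h2M1
    have hpow1 : ((2 * M)⁻¹ : ℝ) ^ (n - N) ≤ 1 :=
      pow_le_one₀ (by positivity) hinv1
    have hpow2 : (0:ℝ) ≤ (2⁻¹ : ℝ) ^ (n - N) := by positivity
    have ha_le : (∏ j ∈ Finset.range n, r j) ≤ aN := by
      have := mul_le_mul_of_nonneg_left hpow1 haNpos.le
      calc (∏ j ∈ Finset.range n, r j) ≤ aN * ((2 * M)⁻¹) ^ (n - N) := h2.1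
        _ ≤ aN * 1 := this
        _ = aN := mul_one _
    have hb_le : (∑ j ∈ Finset.range n, (∏ i ∈ Finset.range j, r i) * c j) ≤ 2 * D := by
      have := h2.2
      nlinarith [hpow2]
    have hiC : (1 - Hseq ρ n 0)⁻¹ ≤ C := by
      rw [hC]; linarith
    have hx := hseq_mem ρ hρ0 hρ1 hρlt n le_rfl one_pos
    have hxpos : 0 < 1 - Hseq ρ n 0 := by linarith [hx.2]
    have h9 : 1 ≤ C * (1 - Hseq ρ n 0) :=
      calc (1:ℝ) = (1 - Hseq ρ n 0)⁻¹ * (1 - Hseq ρ n 0) :=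
            (inv_mul_cancel₀ hxpos.ne').symm
        _ ≤ C * (1 - Hseq ρ n 0) := mul_le_mul_of_nonneg_right hiC hxpos.le
    have h8 : C⁻¹ ≤ 1 - Hseq ρ n 0 := by
      rw [inv_eq_one_div, div_le_iff₀ hCpos]
      nlinarith [h9]
    linarith
  have hle : pe ≤ 1 - C⁻¹ := le_of_tendsto hpe (eventually_atTop.mpr ⟨N, hfin⟩)
  have hCi : 0 < C⁻¹ := inv_pos.mpr hCpos
  linarith
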